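/- Let H be a 3×3 complex Hadamard matrix (all entries of modulus 1, mutually orthogonal columns) and U = H/√3. Let P = U diag(4,0,0) U* and Q_t = U diag(0, 4−t, t) U* for 0 ≤ t ≤ 4. Then P Q_t = 0 and the diagonal entries of P and Q_t coincide (both constant equal to 4/3), so each Q_t is a companion of P, giving infinitely many distinct companions. -/

import Mathlib

open scoped ComplexOrder
open Matrix

noncomputable def opNorm {n : Type*} [Fintype n] [DecidableEq n] (M : Matrix n n ℂ) : ℝ :=
  ‖(Matrix.toEuclideanCLM (𝕜 := ℂ) M : EuclideanSpace ℂ n →L[ℂ] EuclideanSpace ℂ n)‖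

/-- `M` is minimal: its operator norm is ≤ that of `M + D` for every real diagonal `D`. -/
def IsMinimal {n : Type*} [Fintype n] [DecidableEq n] (M : Matrix n n ℂ) : Prop :=
  ∀ d : n → ℝ, opNorm M ≤ opNorm (M + Matrix.diagonal fun i => (d i : ℂ))
/-- `P = U diag(4,0,0) U*`. -/
noncomputable def Pmat (U : Matrix (Fin 3) (Fin 3) ℂ) : Matrix (Fin 3) (Fin 3) ℂ :=
  U * Matrix.diagonal ![(4 : ℂ), 0, 0] * Uᴴ

/-- `Q_t = U diag(0, 4−t, t) U*`. -/
noncomputable def Qmat (U : Matrix (Fin 3) (Fin 3) ℂ) (t : ℝ) : Matrix (Fin 3) (Fin 3) ℂ :=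
  U * Matrix.diagonal ![(0 : ℂ), ((4 - t : ℝ) : ℂ), (t : ℂ)] * Uᴴ

lemma aux_unitary (H : Matrix (Fin 3) (Fin 3) ℂ)
    (hmod : ∀ i j, ‖H i j‖ = 1)
    (horth : ∀ j k : Fin 3, j ≠ k →
      dotProduct (star fun i => H i j) (fun i => H i k) = 0)
    (U : Matrix (Fin 3) (Fin 3) ℂ) (hU : U = (((Real.sqrt 3)⁻¹ : ℝ) : ℂ) • H) :
    Uᴴ * U = 1 := by
  have hHH : Hᴴ * H = (3:ℂ) • 1 := by
    ext j k
    by_cases h : j = k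
    · subst h
      simp only [Matrix.mul_apply, conjTranspose_apply, Matrix.smul_apply, Matrix.one_apply_eq,
        smul_eq_mul, mul_one]
      have h1 : ∀ i, (starRingEnd ℂ) (H i j) * H i j = 1 := by
        intro i
        rw [mul_comm, Complex.mul_conj]
        norm_cast
        rw [Complex.normSq_eq_norm_sq, hmod]; norm_num
      simp [h1, Fin.sum_univ_three]
    · have h0 := horth j k h
      simp only [dotProduct, Pi.star_apply, Complex.star_def] at h0
      simp [Matrix.mul_apply, conjTranspose_apply, Matrix.one_apply_ne h, h0]
  rw [hU, conjTranspose_smul, Matrix.smul_mul, Matrix.mul_smul, smul_smul, hHH, smul_smul]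
  have h3 : (Real.sqrt 3) * (Real.sqrt 3) = 3 := Real.mul_self_sqrt (by norm_num)
  have hc : (starRingEnd ℂ) (((Real.sqrt 3)⁻¹ : ℝ) : ℂ) = (((Real.sqrt 3)⁻¹ : ℝ) : ℂ) :=
    Complex.conj_ofReal _
  rw [Complex.star_def, hc]
  have hone : (((Real.sqrt 3)⁻¹ : ℝ) : ℂ) * (((Real.sqrt 3)⁻¹ : ℝ) : ℂ) * 3 = 1 := by
    have : ((Real.sqrt 3 : ℝ) : ℂ) ≠ 0 := by norm_cast; positivity
    push_cast
    field_simp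
    exact_mod_cast (Real.sq_sqrt (by norm_num : (0:ℝ) ≤ 3)).symm
  rw [hone, one_smul]

theorem stmt16 (H : Matrix (Fin 3) (Fin 3) ℂ)
    (hmod : ∀ i j, ‖H i j‖ = 1)
    (horth : ∀ j k : Fin 3, j ≠ k →
      dotProduct (star fun i => H i j) (fun i => H i k) = 0)
    (U : Matrix (Fin 3) (Fin 3) ℂ) (hU : U = (((Real.sqrt 3)⁻¹ : ℝ) : ℂ) • H) :
    (Pmat U).PosSemidef ∧
    (∀ t : ℝ, 0 ≤ t → t ≤ 4 →
      (Qmat U t).PosSemidef ∧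
      Pmat U * Qmat U t = 0 ∧
      ∀ i, Pmat U i i = Qmat U t i i ∧ Pmat U i i = (4 / 3 : ℂ)) ∧
    (∀ t t' : ℝ, 0 ≤ t → t ≤ 4 → 0 ≤ t' → t' ≤ 4 → Qmat U t = Qmat U t' → t = t') := by
  have hUU : Uᴴ * U = 1 := aux_unitary H hmod horth U hU
  have hUU' : U * Uᴴ = 1 := mul_eq_one_comm.mp hUU
  -- modulus squared of entries of U
  have hUsq : ∀ i k, (starRingEnd ℂ) (U i k) * U i k = (1/3 : ℂ) := by
    intro i k
    rw [mul_comm, Complex.mul_conj, hU]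
    simp only [Matrix.smul_apply, smul_eq_mul]
    norm_cast
    rw [Complex.normSq_mul, Complex.normSq_ofReal, Complex.normSq_eq_norm_sq,
      hmod]
    have h3 : (Real.sqrt 3) * (Real.sqrt 3) = 3 := Real.mul_self_sqrt (by norm_num)
    have h0 : (Real.sqrt 3) ≠ 0 := by positivity
    field_simp
    rw [Real.sq_sqrt (by norm_num : (0:ℝ) ≤ 3)]; norm_num
  have hdiag : ∀ (d : Fin 3 → ℂ) (i : Fin 3),
      (U * Matrix.diagonal d * Uᴴ) i i = (1/3 : ℂ) * (d 0 + d 1 + d 2) := by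
    intro d i
    simp only [Matrix.mul_apply, Matrix.diagonal_apply, conjTranspose_apply,
      Fin.sum_univ_three]
    norm_num [Fin.ext_iff]
    have e : ∀ k, U i k * d k * (starRingEnd ℂ) (U i k) = d k * ((starRingEnd ℂ) (U i k) * U i k) := by
      intro k; ring
    rw [e 0, e 1, e 2, hUsq, hUsq, hUsq]
    ring
  -- conjugation cancellation
  have key : ∀ d1 d2 : Fin 3 → ℂ,
      (U * Matrix.diagonal d1 * Uᴴ) * (U * Matrix.diagonal d2 * Uᴴ)
        = U * Matrix.diagonal (fun i => d1 i * d2 i) * Uᴴ := by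
    intro d1 d2
    have : Matrix.diagonal d1 * Matrix.diagonal d2 = Matrix.diagonal (fun i => d1 i * d2 i) :=
      Matrix.diagonal_mul_diagonal d1 d2
    calc (U * Matrix.diagonal d1 * Uᴴ) * (U * Matrix.diagonal d2 * Uᴴ)
        = U * Matrix.diagonal d1 * (Uᴴ * U) * (Matrix.diagonal d2 * Uᴴ) := by
          simp only [Matrix.mul_assoc]
      _ = U * (Matrix.diagonal d1 * Matrix.diagonal d2) * Uᴴ := by
          rw [hUU, Matrix.mul_one]; simp only [Matrix.mul_assoc]
      _ = U * Matrix.diagonal (fun i => d1 i * d2 i) * Uᴴ := by rw [this]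
  have cancel : ∀ d : Fin 3 → ℂ, Uᴴ * (U * Matrix.diagonal d * Uᴴ) * U = Matrix.diagonal d := by
    intro d
    calc Uᴴ * (U * Matrix.diagonal d * Uᴴ) * U
        = (Uᴴ * U) * Matrix.diagonal d * (Uᴴ * U) := by simp only [Matrix.mul_assoc]
      _ = Matrix.diagonal d := by rw [hUU, Matrix.one_mul, Matrix.mul_one]
  have psd : ∀ d : Fin 3 → ℂ, (∀ i, 0 ≤ d i) → (U * Matrix.diagonal d * Uᴴ).PosSemidef := by
    intro d hd
    exact (Matrix.posSemidef_diagonal_iff.mpr hd).mul_mul_conjTranspose_same U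
  refine ⟨?_, ?_, ?_⟩
  · apply psd
    intro i
    fin_cases i <;> simp <;> norm_num
  · intro t ht ht4
    refine ⟨?_, ?_, ?_⟩
    · apply psd
      intro i
      fin_cases i <;> simp
      · exact Complex.real_le_real.mpr ht4 |>.trans_eq (by norm_num)
      · exact_mod_cast ht
    · rw [Pmat, Qmat, key]
      have : (fun i => (![(4 : ℂ), 0, 0]) i * (![(0 : ℂ), ((4 - t : ℝ) : ℂ), (t : ℂ)]) i)
          = (fun _ => (0:ℂ)) := by
        funext i; fin_cases i <;> simp
      rw [this, Matrix.diagonal_zero, Matrix.mul_zero, Matrix.zero_mul]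
    · intro i
      have hp : Pmat U i i = (4/3 : ℂ) := by
        rw [Pmat, hdiag]
        simp
        norm_num
      have hq : Qmat U t i i = (4/3 : ℂ) := by
        rw [Qmat, hdiag]
        simp
        push_cast
        ring
      exact ⟨hp.trans hq.symm, hp⟩
  · intro t t' _ _ _ _ hQ
    have h3 : (Matrix.diagonal ![(0 : ℂ), ((4 - t : ℝ) : ℂ), (t : ℂ)])
        = Matrix.diagonal ![(0 : ℂ), ((4 - t' : ℝ) : ℂ), (t' : ℂ)] := by
      simp only [Qmat] at hQ
      rw [← cancel ![(0 : ℂ), ((4 - t : ℝ) : ℂ), (t : ℂ)], hQ, cancel]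
    have h4 := congrFun (congrFun h3 2) 2
    simp [Matrix.diagonal_apply_eq] at h4
    exact_mod_cast h4
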